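/- arXiv:1907.00053 — 9 statements merged into one kernel-verified Lean document; each statement's English description precedes it below -/
import Mathlib

section
/- In a chemical reaction network, if state d is straight-line reachable from state a via flux vector u2, and state c is straight-line reachable from d via flux vector u1, where u1 is independent of u2, then c is straight-line reachable from a via the flux vector u1 + u2. -/
/-- A flux vector `u` is applicable at state `c` if every reaction with positive
flux has all of its reactants present (positive concentration) in `c`. -/
def Applicable {σ ρ : Type} (react : ρ → σ → ℕ) (u : ρ → ℝ) (c : σ → ℝ) : Prop :=
  ∀ r, 0 < u r → ∀ s, 0 < react r s → 0 < c s

/-- Net change of species `s` caused by applying flux vector `u`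
(the stoichiometry matrix applied to `u`). -/
noncomputable def StoichAct {σ ρ : Type} [Fintype ρ] (react prod : ρ → σ → ℕ)
    (u : ρ → ℝ) (s : σ) : ℝ :=
  ∑ r, u r * ((prod r s : ℝ) - (react r s : ℝ))

/-- State `d` is straight-line reachable from `c` via flux vector `u`. -/
def SLReach {σ ρ : Type} [Fintype ρ] (react prod : ρ → σ → ℕ)
    (u : ρ → ℝ) (c d : σ → ℝ) : Prop :=
  (∀ r, 0 ≤ u r) ∧ Applicable react u c ∧ (∀ s, 0 ≤ d s) ∧
    ∀ s, d s = c s + StoichAct react prod u s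

/-- Flux vector `u` consumes species `s`. -/
def Consumes {σ ρ : Type} (react : ρ → σ → ℕ) (u : ρ → ℝ) (s : σ) : Prop :=
  ∃ r, 0 < u r ∧ 0 < react r s

/-- Flux vector `u` produces species `s`. -/
def Produces {σ ρ : Type} (prod : ρ → σ → ℕ) (u : ρ → ℝ) (s : σ) : Prop :=
  ∃ r, 0 < u r ∧ 0 < prod r s

/-- `u1` is independent of `u2`: `u1` consumes no species produced or consumed by `u2`. -/
def Independent {σ ρ : Type} (react prod : ρ → σ → ℕ) (u1 u2 : ρ → ℝ) : Prop :=
  ∀ s, Consumes react u1 s → ¬ Consumes react u2 s ∧ ¬ Produces prod u2 s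

/-- Reachability: a finite sequence of straight-line segments. -/
def Reach {σ ρ : Type} [Fintype ρ] (react prod : ρ → σ → ℕ) (c d : σ → ℝ) : Prop :=
  Relation.ReflTransGen (fun x y => ∃ u, SLReach react prod u x y) c d

/-- If `d` is straight-line reachable from `a` via `u2`, and `c` is straight-line
reachable from `d` via `u1`, where `u1` is independent of `u2`, then `c` is
straight-line reachable from `a` via `u1 + u2`. -/
theorem slreach_combine {σ ρ : Type} [Fintype ρ] (react prod : ρ → σ → ℕ)
    (u1 u2 : ρ → ℝ) (a d c : σ → ℝ) (ha : ∀ s, 0 ≤ a s)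
    (h2 : SLReach react prod u2 a d) (h1 : SLReach react prod u1 d c)
    (hind : Independent react prod u1 u2) :
    SLReach react prod (u1 + u2) a c := by
  obtain ⟨hn2, hap2, hd, heq2⟩ := h2
  obtain ⟨hn1, hap1, hc, heq1⟩ := h1
  refine ⟨fun r => add_nonneg (hn1 r) (hn2 r), ?_, hc, ?_⟩
  · intro r hr s hs
    rcases lt_or_eq_of_le (hn2 r) with h2r | h2r
    · exact hap2 r h2r s hs
    · have h1r : 0 < u1 r := by
        have := hr; simp [Pi.add_apply, ← h2r] at this ⊢; linarith
      have hcons : Consumes react u1 s := ⟨r, h1r, hs⟩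
      obtain ⟨hnc, hnp⟩ := hind s hcons
      have hzero : StoichAct react prod u2 s = 0 := by
        apply Finset.sum_eq_zero
        intro r' _
        rcases lt_or_eq_of_le (hn2 r') with h2r' | h2r'
        · have hre : react r' s = 0 := by
            by_contra h
            exact hnc ⟨r', h2r', Nat.pos_of_ne_zero h⟩
          have hpr : prod r' s = 0 := by
            by_contra h
            exact hnp ⟨r', h2r', Nat.pos_of_ne_zero h⟩
          simp [hre, hpr]
        · simp [← h2r']
      have hds : 0 < d s := hap1 r h1r s hs
      have := heq2 s
      rw [hzero] at this
      linarith
  · intro s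
    have : StoichAct react prod (u1 + u2) s
        = StoichAct react prod u1 s + StoichAct react prod u2 s := by
      simp [StoichAct, ← Finset.sum_add_distrib, add_mul]
    rw [this, heq1 s, heq2 s]; ring
end

section
/- In a chemical reaction network, if b is straight-line reachable from a via flux vector u1, and c is straight-line reachable from a via flux vector u2, where u1 is independent of u2, then there exists a state d such that d is straight-line reachable from c via u1. -/
/-- If `a →_{u1} b` and `a →_{u2} c` where `u1` is independent of `u2`, then
there is a state `d` with `c →_{u1} d`. -/
theorem slreach_transfer {σ ρ : Type} [Fintype ρ] (react prod : ρ → σ → ℕ)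
    (u1 u2 : ρ → ℝ) (a b c : σ → ℝ) (ha : ∀ s, 0 ≤ a s)
    (h1 : SLReach react prod u1 a b) (h2 : SLReach react prod u2 a c)
    (hind : Independent react prod u1 u2) :
    ∃ d : σ → ℝ, SLReach react prod u1 c d := by
  obtain ⟨hn1, hap1, hb0, hbe⟩ := h1
  obtain ⟨hn2, hap2, hc0, hce⟩ := h2
  -- If u1 consumes s, then u2's action on s is zero, so c s = a s.
  have hcs : ∀ s, Consumes react u1 s → c s = a s := by
    intro s hcon
    obtain ⟨hnc, hnp⟩ := hind s hcon
    have : StoichAct react prod u2 s = 0 := by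
      unfold StoichAct
      apply Finset.sum_eq_zero
      intro r _
      rcases lt_or_eq_of_le (hn2 r) with hpos | heq
      · have hr : react r s = 0 := by
          by_contra h
          exact hnc ⟨r, hpos, Nat.pos_of_ne_zero h⟩
        have hp : prod r s = 0 := by
          by_contra h
          exact hnp ⟨r, hpos, Nat.pos_of_ne_zero h⟩
        simp [hr, hp]
      · simp [← heq]
    rw [hce s, this, add_zero]
  refine ⟨fun s => c s + StoichAct react prod u1 s, hn1, ?_, ?_, fun s => rfl⟩
  · intro r hr s hs
    have := hcs s ⟨r, hr, hs⟩
    rw [this]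
    exact hap1 r hr s hs
  · intro s
    show 0 ≤ c s + StoichAct react prod u1 s
    by_cases hcon : Consumes react u1 s
    · have := hcs s hcon
      rw [this, ← hbe s]
      exact hb0 s
    · have hnn : 0 ≤ StoichAct react prod u1 s := by
        unfold StoichAct
        apply Finset.sum_nonneg
        intro r _
        rcases lt_or_eq_of_le (hn1 r) with hpos | heq
        · have hr : react r s = 0 := by
            by_contra h
            exact hcon ⟨r, hpos, Nat.pos_of_ne_zero h⟩
          have : (0:ℝ) ≤ (prod r s : ℝ) - (react r s : ℝ) := by
            simp [hr]
          exact mul_nonneg (le_of_lt hpos) this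
        · simp [← heq]
      linarith [hc0 s]
end

section
/- In a chemical reaction network, for any scalar \gamma \geq 0 and state c, the set of states reachable from \gamma c equals \gamma times the set of states reachable from c, i.e., Post(\gamma c) = \gamma Post(c). -/
lemma stoich_smul {σ ρ : Type} [Fintype ρ] (react prod : ρ → σ → ℕ)
    (γ : ℝ) (u : ρ → ℝ) (s : σ) :
    StoichAct react prod (γ • u) s = γ * StoichAct react prod u s := by
  simp [StoichAct, Finset.mul_sum, mul_assoc]

lemma slreach_smul {σ ρ : Type} [Fintype ρ] (react prod : ρ → σ → ℕ)
    (γ : ℝ) (hγ : 0 < γ) {u : ρ → ℝ} {c d : σ → ℝ}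
    (h : SLReach react prod u c d) :
    SLReach react prod (γ • u) (γ • c) (γ • d) := by
  obtain ⟨hu, happ, hd, heq⟩ := h
  refine ⟨fun r => mul_nonneg hγ.le (hu r), ?_, fun s => mul_nonneg hγ.le (hd s), fun s => ?_⟩
  · intro r hr s hs
    simp only [Pi.smul_apply, smul_eq_mul] at hr
    have : 0 < u r := by
      by_contra hle
      push_neg at hle
      nlinarith
    exact mul_pos hγ (happ r this s hs)
  · simp only [Pi.smul_apply, smul_eq_mul, stoich_smul, heq s, mul_add]

lemma reach_smul {σ ρ : Type} [Fintype ρ] (react prod : ρ → σ → ℕ)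
    (γ : ℝ) (hγ : 0 < γ) {c d : σ → ℝ}
    (h : Reach react prod c d) :
    Reach react prod (γ • c) (γ • d) := by
  induction h with
  | refl => exact Relation.ReflTransGen.refl
  | tail _ hxy ih =>
    obtain ⟨u, hu⟩ := hxy
    exact ih.tail ⟨γ • u, slreach_smul react prod γ hγ hu⟩

lemma reach_zero {σ ρ : Type} [Fintype ρ] (react prod : ρ → σ → ℕ)
    (hreact : ∀ r, ∃ s, 0 < react r s) {d : σ → ℝ}
    (h : Reach react prod 0 d) : d = 0 := by
  induction h with
  | refl => rfl
  | tail _ hxy ih =>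
    subst ih
    obtain ⟨u, hu, happ, hd, heq⟩ := hxy
    have hu0 : ∀ r, u r = 0 := by
      intro r
      rcases lt_or_eq_of_le (hu r) with h | h
      · obtain ⟨s, hs⟩ := hreact r
        exact absurd (happ r h s hs) (lt_irrefl 0)
      · exact h.symm
    funext s
    simp [heq s, StoichAct, hu0]

/-- `Post(γ c) = γ Post(c)` for any scalar `γ ≥ 0`, assuming every reaction has
at least one reactant. -/
theorem post_smul {σ ρ : Type} [Fintype ρ] (react prod : ρ → σ → ℕ)
    (hreact : ∀ r, ∃ s, 0 < react r s)
    (γ : ℝ) (hγ : 0 ≤ γ) (c : σ → ℝ) (hc : ∀ s, 0 ≤ c s) :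
    {d | Reach react prod (γ • c) d} = (fun d => γ • d) '' {d | Reach react prod c d} := by
  rcases eq_or_lt_of_le hγ with h0 | hpos
  · subst h0
    ext d
    simp only [Set.mem_setOf_eq, Set.mem_image, zero_smul]
    constructor
    · intro h
      exact ⟨c, Relation.ReflTransGen.refl, (reach_zero react prod hreact h).symm⟩
    · rintro ⟨x, _, rfl⟩
      exact Relation.ReflTransGen.refl
  · ext d
    simp only [Set.mem_setOf_eq, Set.mem_image]
    constructor
    · intro h
      refine ⟨γ⁻¹ • d, ?_, ?_⟩
      · have := reach_smul react prod γ⁻¹ (inv_pos.mpr hpos) h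
        rwa [smul_smul, inv_mul_cancel₀ hpos.ne', one_smul] at this
      · rw [smul_smul, mul_inv_cancel₀ hpos.ne', one_smul]
    · rintro ⟨x, hx, rfl⟩
      exact reach_smul react prod γ hpos hx
end

section
/- In a chemical reaction network, the set of states reachable from a fixed state c is closed under convex combinations: if states \alpha_1, ..., \alpha_k are each reachable from c and a_1, ..., a_k > 0 with \sum a_i = 1, then \sum a_i \alpha_i is reachable from c. -/
section Aux
variable {σ ρ : Type} [Fintype ρ] (react prod : ρ → σ → ℕ)

lemma reach_scale {c d : σ → ℝ} {γ : ℝ} (hγ : 0 < γ)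
    (h : Reach react prod c d) :
    Reach react prod (fun s => γ * c s) (fun s => γ * d s) := by
  induction h with
  | refl => exact Relation.ReflTransGen.refl
  | tail _ hstep ih =>
    obtain ⟨u, hu0, happ, hy0, heq⟩ := hstep
    refine ih.tail ⟨fun r => γ * u r, fun r => mul_nonneg hγ.le (hu0 r), ?_, ?_, ?_⟩
    · intro r hr s hs
      have hr' : 0 < γ * u r := hr
      have hur : 0 < u r := by nlinarith
      exact mul_pos hγ (happ r hur s hs)
    · intro s; exact mul_nonneg hγ.le (hy0 s)
    · intro s
      dsimp only
      have h2 : StoichAct react prod (fun r => γ * u r) s = γ * StoichAct react prod u s := by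
        simp [StoichAct, Finset.mul_sum, mul_assoc]
      rw [h2, heq s]; ring

lemma reach_add {c d e : σ → ℝ} (he : ∀ s, 0 ≤ e s)
    (h : Reach react prod c d) :
    Reach react prod (fun s => c s + e s) (fun s => d s + e s) := by
  induction h with
  | refl => exact Relation.ReflTransGen.refl
  | tail _ hstep ih =>
    obtain ⟨u, hu0, happ, hy0, heq⟩ := hstep
    refine ih.tail ⟨u, hu0, ?_, ?_, ?_⟩
    · intro r hr s hs
      exact add_pos_of_pos_of_nonneg (happ r hr s hs) (he s)
    · intro s; exact add_nonneg (hy0 s) (he s)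
    · intro s; dsimp only; rw [heq s]; ring

lemma reach_nonneg {c d : σ → ℝ} (hc : ∀ s, 0 ≤ c s)
    (h : Reach react prod c d) : ∀ s, 0 ≤ d s := by
  induction h with
  | refl => exact hc
  | tail _ hstep _ => exact hstep.choose_spec.2.2.1

lemma reach_convex_aux (c : σ → ℝ) (hc : ∀ s, 0 ≤ c s) :
    ∀ (k : ℕ) (α : Fin k → σ → ℝ) (a : Fin k → ℝ),
    (∀ i, 0 < a i) → (∀ i s, 0 ≤ α i s) → (∀ i, Reach react prod c (α i)) →
    Reach react prod (fun s => (∑ i, a i) * c s) (fun s => ∑ i, a i * α i s) := by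
  intro k
  induction k with
  | zero =>
    intro α a _ _ _
    have h1 : (fun s => (∑ i : Fin 0, a i) * c s) = (fun s : σ => ∑ i : Fin 0, a i * α i s) := by
      funext s; simp
    rw [h1]
    exact Relation.ReflTransGen.refl
  | succ k ih =>
    intro α a hpos hα hreach
    set A := ∑ i : Fin k, a i.succ with hA
    have hA0 : 0 ≤ A := Finset.sum_nonneg fun i _ => (hpos i.succ).le
    have step1 : Reach react prod (fun s => a 0 * c s + A * c s)
        (fun s => a 0 * α 0 s + A * c s) :=
      reach_add react prod (fun s => mul_nonneg hA0 (hc s))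
        (reach_scale react prod (hpos 0) (hreach 0))
    have step2' := ih (fun i => α i.succ) (fun i => a i.succ)
        (fun i => hpos i.succ) (fun i s => hα i.succ s) (fun i => hreach i.succ)
    have step2 : Reach react prod
        (fun s => A * c s + a 0 * α 0 s)
        (fun s => (∑ i : Fin k, a i.succ * α i.succ s) + a 0 * α 0 s) :=
      reach_add react prod (fun s => mul_nonneg (hpos 0).le (hα 0 s)) step2'
    have e1 : (fun s => (∑ i : Fin (k+1), a i) * c s) = (fun s => a 0 * c s + A * c s) := by
      funext s; rw [Fin.sum_univ_succ]; ring
    have e2 : (fun s => a 0 * α 0 s + A * c s) = (fun s => A * c s + a 0 * α 0 s) := by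
      funext s; ring
    have e3 : (fun s : σ => ∑ i : Fin (k+1), a i * α i s)
        = (fun s => (∑ i : Fin k, a i.succ * α i.succ s) + a 0 * α 0 s) := by
      funext s; rw [Fin.sum_univ_succ]; ring
    rw [e1, e3]
    exact (step1.trans (e2 ▸ step2))
end Aux

/-- The set of states reachable from `c` is closed under convex combinations. -/
theorem reach_convex {σ ρ : Type} [Fintype ρ] (react prod : ρ → σ → ℕ)
    (c : σ → ℝ) (hc : ∀ s, 0 ≤ c s) (k : ℕ)
    (α : Fin k → σ → ℝ) (a : Fin k → ℝ)
    (hpos : ∀ i, 0 < a i) (hsum : ∑ i, a i = 1)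
    (hreach : ∀ i, Reach react prod c (α i)) :
    Reach react prod c (fun s => ∑ i, a i * α i s) := by
  have hα : ∀ i s, 0 ≤ α i s := fun i => reach_nonneg react prod hc (hreach i)
  have h := reach_convex_aux react prod c hc k α a hpos hα hreach
  rw [hsum] at h
  simpa using h
end

section
/- If c is a state of a CRN with P(c) = [c] (every species ever producible from c is already present in c), then every state reachable from c is straight-line reachable from c in a single segment. -/
/-- The set of species present (with positive concentration) in state `d`. -/
def Present {σ : Type} (d : σ → ℝ) : Set σ := {s | 0 < d s}

/-- The set of possible species: species present in some state reachable from `c`. -/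
def Possible {σ ρ : Type} [Fintype ρ] (react prod : ρ → σ → ℕ) (c : σ → ℝ) : Set σ :=
  ⋃ d ∈ {d | Reach react prod c d}, Present d

/-- If every species ever producible from `c` is already present in `c`, then every
state reachable from `c` is straight-line reachable from `c` in a single segment. -/
theorem reach_of_all_present {σ ρ : Type} [Fintype ρ]
    (react prod : ρ → σ → ℕ) (c : σ → ℝ) (hc : ∀ s, 0 ≤ c s)
    (hall : Possible react prod c = Present c) :
    ∀ d : σ → ℝ, Reach react prod c d → ∃ u, SLReach react prod u c d := by
  intro d hd
  induction hd with
  | refl =>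
    refine ⟨0, fun r => le_refl 0, fun r hr => absurd hr (lt_irrefl 0), hc, fun s => ?_⟩
    simp [StoichAct]
  | @tail x y hx hstep ih =>
    obtain ⟨u, hu0, hua, hx0, hxeq⟩ := ih
    obtain ⟨v, hv0, hva, hy0, hyeq⟩ := hstep
    -- species present in x are present in c
    have hmem : ∀ s, 0 < x s → 0 < c s := by
      intro s hs
      have : s ∈ Possible react prod c := by
        refine Set.mem_biUnion hx hs
      rw [hall] at this; exact this
    refine ⟨u + v, fun r => add_nonneg (hu0 r) (hv0 r), ?_, hy0, fun s => ?_⟩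
    · intro r hr s hs
      rcases lt_or_ge 0 (u r) with h | h
      · exact hua r h s hs
      · have : 0 < v r := by
          have := Pi.add_apply u v r ▸ hr
          nlinarith [hu0 r, hv0 r]
        exact hmem s (hva r this s hs)
    · have : StoichAct react prod (u + v) s
          = StoichAct react prod u s + StoichAct react prod v s := by
        simp [StoichAct, ← Finset.sum_add_distrib, add_mul]
      rw [this, hyeq s, hxeq s]; ring
end

section
/- If f : R_{\geq 0}^n \to R_{\geq 0} is superadditive and on some subset D \subseteq R_{> 0}^n that is a cone containing an open ball of positive radius f agrees with a linear function g, then f(x) \leq g(x) for all x in R_{> 0}^n. -/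
/-- If `f` is superadditive on the nonnegative orthant and agrees with a linear
function `g` on a cone `D ⊆ ℝ_{>0}^n` containing an open ball of positive radius,
then `f x ≤ g x` for all positive `x`. -/
theorem superadditive_le_linear_on_cone (n : ℕ) (f : (Fin n → ℝ) → ℝ)
    (g : (Fin n → ℝ) →ₗ[ℝ] ℝ) (D : Set (Fin n → ℝ))
    (hDpos : ∀ x ∈ D, ∀ i, 0 < x i)
    (hcone : ∀ x ∈ D, ∀ t : ℝ, 0 < t → t • x ∈ D)
    (hball : ∃ (x0 : Fin n → ℝ) (r : ℝ), 0 < r ∧ Metric.ball x0 r ⊆ D)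
    (hsup : ∀ a b : Fin n → ℝ, (∀ i, 0 ≤ a i) → (∀ i, 0 ≤ b i) → f a + f b ≤ f (a + b))
    (hfg : ∀ x ∈ D, f x = g x) :
    ∀ x : Fin n → ℝ, (∀ i, 0 < x i) → f x ≤ g x := by
  intro x hx
  obtain ⟨x0, r, hr, hsub⟩ := hball
  have hx0D : x0 ∈ D := hsub (Metric.mem_ball_self hr)
  set t : ℝ := (‖x‖ + 1) / r with ht
  have htpos : 0 < t := div_pos (by positivity) hr
  have hyD : t • x0 ∈ D := hcone x0 hx0D t htpos
  have hxyD : x + t • x0 ∈ D := by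
    have hmem : t⁻¹ • (x + t • x0) ∈ Metric.ball x0 r := by
      rw [Metric.mem_ball, dist_eq_norm]
      have heq : t⁻¹ • (x + t • x0) - x0 = t⁻¹ • x := by
        rw [smul_add, smul_smul, inv_mul_cancel₀ htpos.ne', one_smul]
        abel
      rw [heq, norm_smul, Real.norm_eq_abs, abs_of_pos (inv_pos.mpr htpos)]
      rw [inv_mul_lt_iff₀ htpos, ht, div_mul_cancel₀ _ hr.ne']
      linarith
    have := hcone _ (hsub hmem) t htpos
    rwa [smul_inv_smul₀ htpos.ne'] at this
  have hnn : ∀ i, 0 ≤ x i := fun i => (hx i).le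
  have hynn : ∀ i, 0 ≤ (t • x0) i := fun i =>
    le_of_lt (by simpa using mul_pos htpos (hDpos x0 hx0D i))
  have h1 := hsup x (t • x0) hnn hynn
  have h2 := hfg _ hyD
  have h3 := hfg _ hxyD
  have h4 : g (x + t • x0) = g x + g (t • x0) := map_add g _ _
  linarith
end

section
/- Any superadditive continuous piecewise rational linear function f : R_{>0}^n \to R_{\geq 0} equals the pointwise minimum of a finite collection of rational linear functions. -/
open Set Finset Topology Filter

private lemma eq_on_preconnected_finite {s : Set ℝ} (hs : IsPreconnected s)
    {φ : ℝ → ℝ} (hφ : ContinuousOn φ s) {V : Set ℝ} (hV : V.Finite)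
    (hmap : ∀ t ∈ s, φ t ∈ V) {t₁ t₂ : ℝ} (h1 : t₁ ∈ s) (h2 : t₂ ∈ s) :
    φ t₁ = φ t₂ := by
  by_contra hne
  have himg : IsPreconnected (φ '' s) := hs.image φ hφ
  have hfin : (φ '' s).Finite := hV.subset (by rintro _ ⟨t, ht, rfl⟩; exact hmap t ht)
  rcases lt_or_gt_of_ne hne with h | h
  · exact (Set.Icc_infinite h)
      (hfin.subset (himg.Icc_subset ⟨t₁, h1, rfl⟩ ⟨t₂, h2, rfl⟩))
  · exact (Set.Icc_infinite h)
      (hfin.subset (himg.Icc_subset ⟨t₂, h2, rfl⟩ ⟨t₁, h1, rfl⟩))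

private lemma continuous_finset_inf'' {ι X : Type*} [TopologicalSpace X]
    (s : Finset ι) (hs : s.Nonempty) (g : ι → X → ℝ) (hg : ∀ i, Continuous (g i)) :
    Continuous fun x => s.inf' hs fun i => g i x := by
  induction hs using Finset.Nonempty.cons_induction with
  | singleton i => simp only [Finset.inf'_singleton]; exact hg i
  | cons i s hi hs ih =>
    have : (fun x => (Finset.cons i s hi).inf' (Finset.cons_nonempty hi) fun j => g j x)
        = fun x => min (g i x) (s.inf' hs fun j => g j x) := by
      funext x; rw [Finset.inf'_cons]
    rw [this]
    exact (hg i).min ih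

/-- Any superadditive continuous piecewise rational linear function on the positive
orthant equals the pointwise minimum of finitely many rational linear functions. -/
theorem superadditive_pw_linear_eq_min (n m : ℕ) (f : (Fin n → ℝ) → ℝ)
    (a : Fin (m + 1) → Fin n → ℚ) (D : Fin (m + 1) → Set (Fin n → ℝ))
    (hDsub : ∀ i, D i ⊆ {x : Fin n → ℝ | ∀ j, 0 < x j})
    (hcover : {x : Fin n → ℝ | ∀ j, 0 < x j} ⊆ ⋃ i, D i)
    (hpiece : ∀ i, ∀ x ∈ D i, f x = ∑ j, (a i j : ℝ) * x j)
    (hcont : ContinuousOn f {x : Fin n → ℝ | ∀ j, 0 < x j})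
    (hsup : ∀ x y : Fin n → ℝ, (∀ j, 0 < x j) → (∀ j, 0 < y j) → f x + f y ≤ f (x + y)) :
    ∃ (k : ℕ) (b : Fin (k + 1) → Fin n → ℚ),
      ∀ x : Fin n → ℝ, (∀ j, 0 < x j) →
        f x = Finset.univ.inf' Finset.univ_nonempty
          (fun i : Fin (k + 1) => ∑ j, (b i j : ℝ) * x j) := by
  classical
  set U : Set (Fin n → ℝ) := {x | ∀ j, 0 < x j} with hUdef
  set g : Fin (m + 1) → (Fin n → ℝ) → ℝ := fun i x => ∑ j, (a i j : ℝ) * x j with hgdef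
  have hUopen : IsOpen U := by
    have : U = ⋂ j, (fun x : Fin n → ℝ => x j) ⁻¹' (Set.Ioi 0) := by
      ext x; simp [hUdef, Set.mem_iInter]
    rw [this]
    exact isOpen_iInter_of_finite fun j => (isOpen_Ioi).preimage (continuous_apply j)
  have hgcont : ∀ i, Continuous (g i) :=
    fun i => continuous_finset_sum _ fun j _ => continuous_const.mul (continuous_apply j)
  have hgsmul : ∀ i (t : ℝ) (x : Fin n → ℝ), g i (t • x) = t * g i x := by
    intro i t x
    simp only [hgdef, Pi.smul_apply, smul_eq_mul, Finset.mul_sum]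
    exact Finset.sum_congr rfl fun j _ => by ring
  have hgadd : ∀ i (x y : Fin n → ℝ), g i (x + y) = g i x + g i y := by
    intro i x y
    simp only [hgdef, Pi.add_apply, mul_add, Finset.sum_add_distrib]
  have hsmulU : ∀ {t : ℝ}, 0 < t → ∀ {x : Fin n → ℝ}, x ∈ U → t • x ∈ U := by
    intro t ht x hx j
    exact mul_pos ht (hx j)
  -- homogeneity
  have hom : ∀ x ∈ U, ∀ t : ℝ, 0 < t → f (t • x) = t * f x := by
    intro x hx t ht
    have key : f (t • x) / t = f ((1 : ℝ) • x) / 1 := by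
      refine eq_on_preconnected_finite (φ := fun s : ℝ => f (s • x) / s)
        isPreconnected_Ioi ?_ (Set.finite_range fun i => g i x) ?_ ht (Set.mem_Ioi.mpr one_pos)
      · apply ContinuousOn.div
        · exact hcont.comp (Continuous.continuousOn (continuous_id.smul continuous_const))
            fun s hs => hsmulU hs hx
        · exact continuousOn_id
        · intro s hs; exact ne_of_gt hs
      · intro s hs
        have hsx : s • x ∈ U := hsmulU hs hx
        obtain ⟨i, hi⟩ := Set.mem_iUnion.mp (hcover hsx)
        refine ⟨i, ?_⟩
        show g i x = f (s • x) / s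
        have hfs : f (s • x) = g i (s • x) := hpiece i _ hi
        have hs0 : (0:ℝ) < s := hs
        rw [hfs, hgsmul, mul_div_cancel_left₀ _ (ne_of_gt hs0)]
    rw [one_smul, div_one] at key
    field_simp at key
    linarith [key]
  -- the closed pieces
  set E : Fin (m + 1) → Set (Fin n → ℝ) := fun i => {z | z ∈ U ∧ f z = g i z} with hEdef
  have hEsubU : ∀ i, E i ⊆ U := fun i z hz => hz.1
  have hDE : ∀ i, D i ⊆ E i := fun i z hz => ⟨hDsub i hz, hpiece i z hz⟩
  have hFeq : ∀ i, ∀ z ∈ closure (E i), z ∈ U → f z = g i z := by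
    intro i z hzc hzU
    have hne : (𝓝[E i] z).NeBot := mem_closure_iff_nhdsWithin_neBot.mp hzc
    have h1 : Filter.Tendsto f (𝓝[E i] z) (𝓝 (f z)) :=
      (hcont z hzU).mono_left (nhdsWithin_mono z (hEsubU i))
    have h2 : Filter.Tendsto (g i) (𝓝[E i] z) (𝓝 (g i z)) :=
      ((hgcont i).tendsto z).mono_left nhdsWithin_le_nhds
    have heq : f =ᶠ[𝓝[E i] z] g i :=
      eventually_nhdsWithin_of_forall fun w hw => hw.2
    exact tendsto_nhds_unique (h1.congr' heq) h2
  -- domination from a ball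
  have hdom : ∀ (i : Fin (m + 1)) (y : Fin n → ℝ) (r : ℝ), 0 < r →
      Metric.ball y r ⊆ closure (E i) → Metric.ball y r ⊆ U →
      ∀ x ∈ U, f x ≤ g i x := by
    intro i y r hr hball hballU x hx
    have hyU : y ∈ U := hballU (Metric.mem_ball_self hr)
    set N : ℝ := ‖x‖ / r + 1 with hNdef
    have hN0 : 0 < N := by positivity
    have hxr : ‖x‖ < N * r := by
      have hNr : N * r = ‖x‖ + r := by
        rw [hNdef, add_mul, div_mul_cancel₀ _ (ne_of_gt hr), one_mul]
      linarith
    set z : Fin n → ℝ := y + N⁻¹ • x with hzdef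
    have hz_ball : z ∈ Metric.ball y r := by
      rw [Metric.mem_ball, dist_eq_norm]
      have : z - y = N⁻¹ • x := by rw [hzdef]; abel
      rw [this, norm_smul, norm_inv, Real.norm_eq_abs, abs_of_pos hN0]
      rw [inv_mul_lt_iff₀ hN0]
      exact hxr
    have hzU : z ∈ U := hballU hz_ball
    have hNy : ∀ j, 0 < (N • y) j := fun j => mul_pos hN0 (hyU j)
    have h1 : f (N • y) + f x ≤ f (N • y + x) := hsup _ _ hNy hx
    have hNyx : N • y + x = N • z := by
      rw [hzdef, smul_add, smul_inv_smul₀ (ne_of_gt hN0)]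
    have e1 : f (N • y) = N * g i y := by
      rw [hom y hyU N hN0, hFeq i y (hball (Metric.mem_ball_self hr)) hyU]
    have e2 : f (N • y + x) = N * g i z := by
      rw [hNyx, hom z hzU N hN0, hFeq i z (hball hz_ball) hzU]
    have e3 : N * g i z = N * g i y + g i x := by
      rw [hzdef, hgadd, hgsmul]
      field_simp
    linarith
  -- Baire
  set Fo : Option (Fin (m + 1)) → Set (Fin n → ℝ) :=
    fun o => o.elim Uᶜ fun i => closure (E i) with hFodef
  have hFoclosed : ∀ o, IsClosed (Fo o) := by
    rintro (_ | i)
    · exact hUopen.isClosed_compl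
    · exact isClosed_closure
  have hFocover : ⋃ o, Fo o = Set.univ := by
    ext z
    simp only [Set.mem_iUnion, Set.mem_univ, iff_true]
    by_cases hz : z ∈ U
    · obtain ⟨i, hi⟩ := Set.mem_iUnion.mp (hcover hz)
      exact ⟨some i, subset_closure (hDE i hi)⟩
    · exact ⟨none, hz⟩
  have hdense := dense_iUnion_interior_of_closed hFoclosed hFocover
  have hmeet : ∀ V : Set (Fin n → ℝ), IsOpen V → V.Nonempty → V ⊆ U →
      ∃ i, ((interior (closure (E i))) ∩ V).Nonempty := by
    intro V hVo hVne hVU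
    obtain ⟨z, hz1, hz2⟩ := hdense.exists_mem_open hVo hVne
    obtain ⟨o, ho⟩ := Set.mem_iUnion.mp hz1
    match o with
    | none => exact absurd (hVU hz2) (interior_subset ho)
    | some i => exact ⟨i, z, ho, hz2⟩
  set S : Finset (Fin (m + 1)) :=
    Finset.univ.filter fun i => ((interior (closure (E i))) ∩ U).Nonempty with hSdef
  have hSne : S.Nonempty := by
    have hUne : U.Nonempty := ⟨fun _ => 1, fun j => one_pos⟩
    obtain ⟨i, hi⟩ := hmeet U hUopen hUne subset_rfl
    exact ⟨i, Finset.mem_filter.mpr ⟨Finset.mem_univ i, hi⟩⟩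
  have hSkey : ∀ i ∈ S, ∀ x ∈ U, f x ≤ g i x := by
    intro i hi x hx
    obtain ⟨y, hy1, hy2⟩ := (Finset.mem_filter.mp hi).2
    obtain ⟨r, hr, hball⟩ := Metric.isOpen_iff.mp (isOpen_interior.inter hUopen) y ⟨hy1, hy2⟩
    exact hdom i y r hr (fun w hw => interior_subset (hball hw).1)
      (fun w hw => (hball hw).2) x hx
  set h : (Fin n → ℝ) → ℝ := fun x => S.inf' hSne fun i => g i x with hhdef
  have hhcont : Continuous h := continuous_finset_inf'' S hSne g hgcont
  have hle : ∀ x ∈ U, f x ≤ h x := fun x hx =>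
    Finset.le_inf' hSne _ fun i hi => hSkey i hi x hx
  have hge : ∀ x ∈ U, h x ≤ f x := by
    intro x hx
    by_contra hlt
    push_neg at hlt
    set B : Set (Fin n → ℝ) := {z | z ∈ U ∧ f z < h z} with hBdef
    have hBopen : IsOpen B := by
      rw [isOpen_iff_mem_nhds]
      intro z hz
      have hfz : ContinuousAt f z := (hcont z hz.1).continuousAt (hUopen.mem_nhds hz.1)
      have hev : ∀ᶠ w in 𝓝 z, f w < h w := hfz.eventually_lt hhcont.continuousAt hz.2
      have hUev : ∀ᶠ w in 𝓝 z, w ∈ U := hUopen.mem_nhds hz.1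
      filter_upwards [hev, hUev] with w hw1 hw2
      exact ⟨hw2, hw1⟩
    have hBne : B.Nonempty := ⟨x, hx, hlt⟩
    have hBU : B ⊆ U := fun z hz => hz.1
    obtain ⟨i, z, hz1, hz2⟩ := hmeet B hBopen hBne hBU
    have hzU : z ∈ U := hz2.1
    have hiS : i ∈ S := Finset.mem_filter.mpr
      ⟨Finset.mem_univ i, ⟨z, hz1, hzU⟩⟩
    have : h z ≤ g i z := Finset.inf'_le _ hiS
    have : f z = g i z := hFeq i z (interior_subset hz1) hzU
    linarith [hz2.2, Finset.inf'_le (fun i => g i z) hiS]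
  obtain ⟨i₀, hi₀⟩ := hSne
  refine ⟨m, fun i => if i ∈ S then a i else a i₀, ?_⟩
  intro x hx
  have hx' : x ∈ U := hx
  have hfx : f x = h x := le_antisymm (hle x hx') (hge x hx')
  rw [hfx]
  apply le_antisymm
  · apply Finset.le_inf'
    intro i _
    by_cases hiS : i ∈ S
    · simp only [if_pos hiS]
      exact Finset.inf'_le _ hiS
    · simp only [if_neg hiS]
      exact Finset.inf'_le _ hi₀
  · apply Finset.le_inf'
    intro i hiS
    have : (fun i : Fin (m + 1) => ∑ j, ((if i ∈ S then a i else a i₀) j : ℝ) * x j) i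
        = g i x := by simp only [if_pos hiS, hgdef]
    calc Finset.univ.inf' Finset.univ_nonempty
          (fun i : Fin (m + 1) => ∑ j, ((if i ∈ S then a i else a i₀) j : ℝ) * x j)
        ≤ _ := Finset.inf'_le _ (Finset.mem_univ i)
      _ = g i x := this
end

section
/- Let f : R_{\geq 0}^n \to R_{\geq 0} be superadditive and positive-continuous, and for each S \subseteq [n] let g_S be the continuous function agreeing with f on the domain D_S of vectors whose set of positive coordinates is exactly S. If S \subseteq T \subseteq [n], then for all x \in D_S, g_S(x) \leq g_T(x). -/
/-- Domain inequality: for a superadditive, nonnegative, positive-continuous function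
`f` with continuous extensions `g S` on each domain `D_S`, if `S ⊆ T` then
`g S x ≤ g T x` for every `x ∈ D_S`. -/
theorem domain_inequality (n : ℕ) (f : (Fin n → ℝ) → ℝ)
    (g : Set (Fin n) → (Fin n → ℝ) → ℝ)
    (hnn : ∀ x : Fin n → ℝ, (∀ i, 0 ≤ x i) → 0 ≤ f x)
    (hsup : ∀ a b : Fin n → ℝ, (∀ i, 0 ≤ a i) → (∀ i, 0 ≤ b i) → f a + f b ≤ f (a + b))
    (hgcont : ∀ S, ContinuousOn (g S) {x : Fin n → ℝ | ∀ i, 0 ≤ x i})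
    (hfg : ∀ (S : Set (Fin n)) (x : Fin n → ℝ), (∀ i, 0 ≤ x i) →
      (∀ i, 0 < x i ↔ i ∈ S) → f x = g S x)
    (S T : Set (Fin n)) (hST : S ⊆ T)
    (x : Fin n → ℝ) (hx : ∀ i, 0 ≤ x i) (hxS : ∀ i, 0 < x i ↔ i ∈ S) :
    g S x ≤ g T x := by
  classical
  rw [← hfg S x hx hxS]
  set φ : ℝ → (Fin n → ℝ) := fun ε i => x i + (if i ∈ T \ S then ε else 0) with hφ
  have hznn : ∀ ε : ℝ, 0 ≤ ε → ∀ i, (0:ℝ) ≤ (if i ∈ T \ S then ε else 0) := by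
    intro ε hε i; split <;> simp [hε]
  have hφnn : ∀ ε : ℝ, 0 ≤ ε → ∀ i, 0 ≤ φ ε i := by
    intro ε hε i
    exact add_nonneg (hx i) (hznn ε hε i)
  have hφT : ∀ ε : ℝ, 0 < ε → ∀ i, 0 < φ ε i ↔ i ∈ T := by
    intro ε hε i
    by_cases hiS : i ∈ S
    · have hni : i ∉ T \ S := fun h => h.2 hiS
      simp only [φ, if_neg hni, add_zero]
      rw [hxS]
      simp [hiS, hST hiS]
    · by_cases hiT : i ∈ T
      · have : i ∈ T \ S := ⟨hiT, hiS⟩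
        simp only [φ, this, if_pos]
        constructor
        · intro; exact hiT
        · intro; have := hx i; linarith
      · have : i ∉ T \ S := fun h => hiT h.1
        simp only [φ, this, if_neg, add_zero, not_false_iff]
        have hx0 : x i = 0 := by
          by_contra h
          exact hiS ((hxS i).1 (lt_of_le_of_ne (hx i) (Ne.symm h)))
        simp [hx0, hiT]
  have key : ∀ ε : ℝ, 0 < ε → f x ≤ g T (φ ε) := by
    intro ε hε
    rw [← hfg T (φ ε) (hφnn ε hε.le) (hφT ε hε)]
    have h1 := hsup x (fun i => if i ∈ T \ S then ε else 0) hx (hznn ε hε.le)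
    have h2 := hnn (fun i => if i ∈ T \ S then ε else 0) (hznn ε hε.le)
    have heq : φ ε = x + fun i => if i ∈ T \ S then ε else 0 := by
      funext i; rfl
    rw [heq]
    linarith
  -- take limit ε → 0⁺
  have hφtend : Filter.Tendsto φ (nhdsWithin 0 (Set.Ioi 0))
      (nhdsWithin x {y : Fin n → ℝ | ∀ i, 0 ≤ y i}) := by
    rw [tendsto_nhdsWithin_iff]
    constructor
    · have : Filter.Tendsto φ (nhds 0) (nhds x) := by
        rw [tendsto_pi_nhds]
        intro i
        have : Continuous fun ε : ℝ => x i + (if i ∈ T \ S then ε else 0) := by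
          split <;> continuity
        simpa [φ] using this.tendsto 0
      exact this.mono_left nhdsWithin_le_nhds
    · filter_upwards [self_mem_nhdsWithin] with ε hε
      exact hφnn ε (le_of_lt hε)
  have hgtend : Filter.Tendsto (fun ε => g T (φ ε)) (nhdsWithin 0 (Set.Ioi 0))
      (nhds (g T x)) :=
    ((hgcont T x hx).tendsto).comp hφtend
  exact ge_of_tendsto hgtend (by
    filter_upwards [self_mem_nhdsWithin] with ε hε
    exact key ε hε)
end

section
/- Let f : R_{\geq 0}^n \to R_{\geq 0} be superadditive positive-continuous piecewise rational linear, with g_S the continuous extension of f restricted to domain D_S for each S \subseteq [n], and P_K(x) = 1 if x(i) > 0 for all i \in K and 0 otherwise. Then f(x) = min over S \subseteq [n] of [ g_S(x) + \sum_{K \not\subseteq S} P_K(x) g_K(x) ]. -/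
open Classical in
/-- A superadditive positive-continuous piecewise rational linear function equals the
minimum over `S ⊆ [n]` of `g_S(x) + ∑_{K ⊄ S} P_K(x) g_K(x)`. -/
theorem min_over_domains (n : ℕ) (f : (Fin n → ℝ) → ℝ)
    (g : Finset (Fin n) → (Fin n → ℝ) → ℝ)
    (hgnn : ∀ S x, 0 ≤ g S x)
    (hfg : ∀ (S : Finset (Fin n)) (x : Fin n → ℝ), (∀ i, 0 ≤ x i) →
      (∀ i, 0 < x i ↔ i ∈ S) → f x = g S x)
    (hdom : ∀ S T : Finset (Fin n), S ⊆ T → ∀ x : Fin n → ℝ, (∀ i, 0 ≤ x i) →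
      (∀ i, 0 < x i ↔ i ∈ S) → g S x ≤ g T x) :
    ∀ x : Fin n → ℝ, (∀ i, 0 ≤ x i) →
      f x = Finset.univ.inf' Finset.univ_nonempty (fun S : Finset (Fin n) =>
        g S x + ∑ K ∈ Finset.univ.filter (fun K : Finset (Fin n) => ¬ K ⊆ S),
          (if ∀ i ∈ K, 0 < x i then (1 : ℝ) else 0) * g K x) := by
  intro x hx
  set I : Finset (Fin n) := Finset.univ.filter (fun i => 0 < x i) with hI
  have hIx : ∀ i, 0 < x i ↔ i ∈ I := by intro i; simp [hI]
  have hf : f x = g I x := hfg I x hx hIx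
  rw [hf]
  have hterm_nonneg : ∀ K : Finset (Fin n),
      0 ≤ (if ∀ i ∈ K, 0 < x i then (1 : ℝ) else 0) * g K x := by
    intro K
    split_ifs with h
    · simpa using hgnn K x
    · simp
  apply le_antisymm
  · apply Finset.le_inf'
    intro S _
    by_cases hIS : I ⊆ S
    · have h1 : g I x ≤ g S x := hdom I S hIS x hx hIx
      have h2 : 0 ≤ ∑ K ∈ Finset.univ.filter (fun K : Finset (Fin n) => ¬ K ⊆ S),
          (if ∀ i ∈ K, 0 < x i then (1 : ℝ) else 0) * g K x :=
        Finset.sum_nonneg fun K _ => hterm_nonneg K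
      linarith
    · have hmem : I ∈ Finset.univ.filter (fun K : Finset (Fin n) => ¬ K ⊆ S) := by
        simp [hIS]
      have hIval : (if ∀ i ∈ I, 0 < x i then (1 : ℝ) else 0) * g I x = g I x := by
        have h : ∀ i ∈ I, 0 < x i := fun i hi => (hIx i).mpr hi
        rw [if_pos h, one_mul]
      have h1 : g I x ≤ ∑ K ∈ Finset.univ.filter (fun K : Finset (Fin n) => ¬ K ⊆ S),
          (if ∀ i ∈ K, 0 < x i then (1 : ℝ) else 0) * g K x := by
        calc g I x = (if ∀ i ∈ I, 0 < x i then (1 : ℝ) else 0) * g I x := hIval.symm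
        _ ≤ _ := Finset.single_le_sum (fun K _ => hterm_nonneg K) hmem
      have h2 : 0 ≤ g S x := hgnn S x
      linarith
  · refine le_trans (Finset.inf'_le _ (Finset.mem_univ I)) ?_
    have : ∀ K ∈ Finset.univ.filter (fun K : Finset (Fin n) => ¬ K ⊆ I),
        (if ∀ i ∈ K, 0 < x i then (1 : ℝ) else 0) * g K x = 0 := by
      intro K hK
      simp only [Finset.mem_filter] at hK
      have : ¬ ∀ i ∈ K, 0 < x i := fun h => hK.2 (fun i hi => (hIx i).mp (h i hi))
      simp [this]
    rw [Finset.sum_eq_zero this, add_zero]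
end
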